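/- Let p ≥ 1, k ∈ {1,…,n}, and let (w_0, w_1, …, w_{p−1}) be a cycle of F₀(z) = (z_1^d,…,z_n^d) with all coordinates of w_0 nonzero, so w_{i,k} = w_{0,k}^{d^i} and w_{0,k}^{d^p − 1} = 1. Then for any multi-index I and the perturbation family F_t = F₀ + t·z^I·e_k, the derivative at t = 0 of the analytically-continued k-th coordinate of the i-th point of the cycle equals [w_{0,k}^{d^i} · Σ_{s=0}^{p−1} d^{p−s−1} · w_{0,k}^{−d^{s+i+1}} · (w_0^I)^{d^{s+i}}] / (1 − d^p). -/

import Mathlib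

theorem stmt15 (n d p : ℕ) (hd : 2 ≤ d) (hp : 1 ≤ p) (k : Fin n)
    (w₀ : Fin n → ℂ) (hnz : ∀ j, w₀ j ≠ 0) (hper : ∀ j, (w₀ j) ^ (d ^ p) = w₀ j)
    (I : Fin n → ℕ)
    (w : ℂ → ℕ → Fin n → ℂ)
    (hw0 : ∀ i j, w 0 i j = (w₀ j) ^ (d ^ i))
    (hrec : ∀ t i j, w t (i + 1) j =
      (w t i j) ^ d + (if j = k then t * ∏ m, (w t i m) ^ (I m) else 0))
    (hperiodic : ∀ t i, w t (i + p) = w t i)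
    (hfix : ∀ t i j, j ≠ k → w t i j = w 0 i j)
    (hdiff : ∀ i, DifferentiableAt ℂ (fun t => w t i k) 0) :
    ∀ i, deriv (fun t => w t i k) 0 =
      (w₀ k) ^ (d ^ i) *
        (∑ s ∈ Finset.range p, (d : ℂ) ^ (p - s - 1) *
          ((w₀ k) ^ (d ^ (s + i + 1)))⁻¹ * (∏ m, (w₀ m) ^ (I m)) ^ (d ^ (s + i))) /
        (1 - (d : ℂ) ^ p) := by
  intro i
  set a : ℂ := w₀ k with ha
  have hane : a ≠ 0 := hnz k
  set P : ℂ := ∏ m, (w₀ m) ^ (I m) with hP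
  set u : ℕ → ℂ := fun i => deriv (fun t => w t i k) 0 with hu
  show u i = _
  -- key periodicity of powers
  have hkey : ∀ m : ℕ, a ^ (d ^ (m + p)) = a ^ (d ^ m) := by
    intro m
    rw [pow_add, mul_comm, pow_mul, hper k]
  -- the recurrence for u
  have hrecu : ∀ j : ℕ, u (j + 1) = (d : ℂ) * (a ^ (d ^ j)) ^ (d - 1) * u j + P ^ (d ^ j) := by
    intro j
    have hg : HasDerivAt (fun t => w t j k) (u j) 0 := (hdiff j).hasDerivAt
    set C : ℂ := ∏ m ∈ Finset.univ.erase k, (w₀ m ^ (d ^ j)) ^ (I m) with hC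
    have hfun : (fun t => w t (j + 1) k) =
        fun t => (w t j k) ^ d + t * ((w t j k) ^ (I k) * C) := by
      funext t
      rw [hrec t j k, if_pos rfl]
      congr 1
      have hsplitp : ∏ m, (w t j m) ^ (I m) =
          (w t j k) ^ (I k) * ∏ m ∈ Finset.univ.erase k, (w t j m) ^ (I m) :=
        (Finset.mul_prod_erase Finset.univ (fun m => (w t j m) ^ (I m)) (Finset.mem_univ k)).symm
      rw [hsplitp, hC]
      congr 1
      congr 1
      apply Finset.prod_congr rfl
      intro m hm
      rw [hfix t j m (Finset.ne_of_mem_erase hm), hw0]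
    have hD : HasDerivAt (fun t => (w t j k) ^ d + t * ((w t j k) ^ (I k) * C))
        (((d : ℂ) * (w 0 j k) ^ (d - 1) * u j) +
          (1 * ((w 0 j k) ^ (I k) * C) +
            0 * (((I k : ℂ) * (w 0 j k) ^ (I k - 1) * u j) * C))) 0 :=
      (hg.pow d).add ((hasDerivAt_id 0).mul ((hg.pow (I k)).mul_const C))
    have hPj : (a ^ (d ^ j)) ^ (I k) * C = P ^ (d ^ j) := by
      rw [hP, ← Finset.prod_pow]
      rw [← Finset.mul_prod_erase Finset.univ (fun m => (w₀ m ^ I m) ^ (d ^ j))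
        (Finset.mem_univ k)]
      rw [hC]
      congr 1
      · rw [← pow_mul, ← pow_mul, mul_comm]
      · refine Finset.prod_congr rfl fun m _ => ?_
        rw [← pow_mul, ← pow_mul, mul_comm]
    have := hD.deriv
    rw [hw0 j k, ← ha] at this
    simp only [hu]
    rw [hfun, this, hPj]
    ring
  -- iterate the recurrence
  have claim : ∀ m : ℕ, u (i + m) =
      (d : ℂ) ^ m * a ^ (d ^ (i + m)) * (a ^ (d ^ i))⁻¹ * u i +
      ∑ s ∈ Finset.range m, (d : ℂ) ^ (m - 1 - s) * a ^ (d ^ (i + m)) *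
        (a ^ (d ^ (s + i + 1)))⁻¹ * P ^ (d ^ (s + i)) := by
    intro m
    induction m with
    | zero =>
        simp [mul_inv_cancel₀ (pow_ne_zero _ hane)]
    | succ m ih =>
        have hstep : u (i + (m + 1)) = (d : ℂ) * (a ^ (d ^ (i + m))) ^ (d - 1) * u (i + m)
            + P ^ (d ^ (i + m)) := by
          rw [← hrecu (i + m)]
          ring_nf
        rw [hstep, ih, Finset.sum_range_succ]
        have hsplit : a ^ (d ^ (i + m + 1)) = a ^ (d ^ (i + m) * (d - 1)) * a ^ (d ^ (i + m)) := by
          rw [← pow_add]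
          congr 1
          have h1 : d ^ (i + m) * (d - 1) + d ^ (i + m) = d ^ (i + m) * d := by
            obtain ⟨e, rfl⟩ : ∃ e, d = e + 1 := ⟨d - 1, by omega⟩
            simp [Nat.mul_succ]
          rw [h1, pow_succ]
        have hlast : (d : ℂ) ^ (m + 1 - 1 - m) * a ^ (d ^ (i + (m + 1))) *
            (a ^ (d ^ (m + i + 1)))⁻¹ * P ^ (d ^ (m + i)) = P ^ (d ^ (i + m)) := by
          have h2 : m + 1 - 1 - m = 0 := by omega
          have h3 : i + (m + 1) = m + i + 1 := by omega
          have h4 : m + i = i + m := by omega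
          rw [h2, h3, h4, pow_zero, one_mul,
            mul_inv_cancel₀ (pow_ne_zero _ hane), one_mul]
        rw [hlast]
        have hS : (d : ℂ) * (a ^ (d ^ (i + m))) ^ (d - 1) *
            (∑ s ∈ Finset.range m, (d : ℂ) ^ (m - 1 - s) * a ^ (d ^ (i + m)) *
              (a ^ (d ^ (s + i + 1)))⁻¹ * P ^ (d ^ (s + i))) =
            ∑ s ∈ Finset.range m, (d : ℂ) ^ (m + 1 - 1 - s) * a ^ (d ^ (i + (m + 1))) *
              (a ^ (d ^ (s + i + 1)))⁻¹ * P ^ (d ^ (s + i)) := by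
          rw [Finset.mul_sum]
          refine Finset.sum_congr rfl fun s hs => ?_
          have hsm : s < m := Finset.mem_range.mp hs
          have h5 : m + 1 - 1 - s = (m - 1 - s) + 1 := by omega
          have h6 : i + (m + 1) = i + m + 1 := by omega
          rw [h5, h6, hsplit, ← pow_mul, pow_succ]
          ring
        have hT : (d : ℂ) * (a ^ (d ^ (i + m))) ^ (d - 1) *
            ((d : ℂ) ^ m * a ^ (d ^ (i + m)) * (a ^ (d ^ i))⁻¹ * u i) =
            (d : ℂ) ^ (m + 1) * a ^ (d ^ (i + (m + 1))) * (a ^ (d ^ i))⁻¹ * u i := by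
          have h6 : i + (m + 1) = i + m + 1 := by omega
          rw [h6, hsplit, ← pow_mul, pow_succ]
          ring
        rw [mul_add, hT, hS]
        ring
  -- periodicity of u
  have hup : u (i + p) = u i := by
    have hfe : (fun t => w t (i + p) k) = fun t => w t i k := by
      funext t; rw [hperiodic t i]
    simp only [hu]; rw [hfe]
  -- nonvanishing of denominator
  have hne : (1 : ℂ) - (d : ℂ) ^ p ≠ 0 := by
    intro h
    have h1 : ((d ^ p : ℕ) : ℂ) = ((1 : ℕ) : ℂ) := by
      push_cast
      linear_combination -h
    have h2 : d ^ p = 1 := Nat.cast_injective h1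
    have h3 : 1 < d ^ p := Nat.one_lt_pow (by omega) (by omega)
    omega
  -- conclude
  have heq := claim p
  rw [hup, hkey i] at heq
  have heq2 : ∀ s ∈ Finset.range p,
      (d : ℂ) ^ (p - 1 - s) * a ^ (d ^ i) * (a ^ (d ^ (s + i + 1)))⁻¹ * P ^ (d ^ (s + i)) =
      a ^ (d ^ i) * ((d : ℂ) ^ (p - s - 1) * (a ^ (d ^ (s + i + 1)))⁻¹ * P ^ (d ^ (s + i))) := by
    intro s _
    have : p - 1 - s = p - s - 1 := by omega
    rw [this]; ring
  rw [Finset.sum_congr rfl heq2, ← Finset.mul_sum] at heq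
  have hinv : a ^ (d ^ i) * (a ^ (d ^ i))⁻¹ = 1 := mul_inv_cancel₀ (pow_ne_zero _ hane)
  rw [eq_div_iff hne]
  linear_combination heq + ((d : ℂ) ^ p * u i) * hinv
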